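/- For every integer g ≥ 1 there exists a polynomial P_g ∈ ℚ[y] of degree at most g − 1 such that (1 − 24w)^{5g−1} · W_g = w · P_g(w), where P_g(w) denotes substitution of w into P_g. In particular, W₁ = 96·w·(1 − 24w)⁻⁴. -/

import Mathlib

open PowerSeries

/-- The formal derivative `d/dx` on `ℚ⟦x⟧`. -/
noncomputable def D : PowerSeries ℚ → PowerSeries ℚ := PowerSeries.derivativeFun

namespace Stmt9Aux

lemma D_add (f g : ℚ⟦X⟧) : D (f + g) = D f + D g := derivativeFun_add f g
lemma D_mul (f g : ℚ⟦X⟧) : D (f * g) = f * D g + g * D f := by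
  show derivativeFun _ = _
  rw [derivativeFun_mul]; simp [D, smul_eq_mul]
lemma D_C (r : ℚ) : D (C r) = 0 := derivativeFun_C
lemma D_one : D (1 : ℚ⟦X⟧) = 0 := derivativeFun_one
lemma D_X : D (X : ℚ⟦X⟧) = 1 := by
  show derivativeFun _ = _
  exact derivative_X

lemma D_pow (f : ℚ⟦X⟧) (n : ℕ) : D (f ^ (n+1)) = (n+1 : ℚ⟦X⟧) * f ^ n * D f := by
  induction n with
  | zero => simp [D_mul]
  | succ n ih =>
    rw [pow_succ, D_mul, ih]
    push_cast
    ring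

lemma D_aeval (v : ℚ⟦X⟧) (q : Polynomial ℚ) :
    D (Polynomial.aeval v q) = Polynomial.aeval v (Polynomial.derivative q) * D v := by
  induction q using Polynomial.induction_on with
  | C a => simp [Polynomial.aeval_C, PowerSeries.algebraMap_apply, Algebra.algebraMap_self, RingHom.id_apply, D_C]
  | add p q hp hq => simp [map_add, D_add, hp, hq]; ring
  | monomial n a _ =>
    simp only [map_mul, Polynomial.aeval_C, map_pow, Polynomial.aeval_X,
      Polynomial.derivative_mul, Polynomial.derivative_C, Polynomial.derivative_X_pow,
      PowerSeries.algebraMap_apply, Algebra.algebraMap_self, RingHom.id_apply, zero_mul, zero_add]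
    rw [D_mul, D_pow, D_C]
    simp only [map_add, map_one, map_natCast]
    push_cast
    ring


lemma D_sub (f g : ℚ⟦X⟧) : D (f - g) = D f - D g := by
  ext n
  exact congrArg (coeff n) (map_sub (derivative ℚ) f g)

lemma D_const_mul (r : ℚ) (g : ℚ⟦X⟧) : D (C r * g) = C r * D g := by
  rw [D_mul, D_C]; ring

lemma D_u (w : ℚ⟦X⟧) : D (1 - 24*w) = -(24:ℚ⟦X⟧) * D w := by
  rw [D_sub, D_one]
  rw [show (24:ℚ⟦X⟧) = C 24 from (map_ofNat _ _).symm, D_const_mul]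
  ring

def Rep (w : ℚ⟦X⟧) (d m : ℕ) (f : ℚ⟦X⟧) : Prop :=
  ∃ q : Polynomial ℚ, q.natDegree ≤ d ∧ (1 - 24*w)^m * f = Polynomial.aeval w q

lemma rep_zero (w : ℚ⟦X⟧) (d m : ℕ) : Rep w d m 0 := ⟨0, by simp⟩

lemma rep_mono {w : ℚ⟦X⟧} {d d' m : ℕ} {f} (h : d ≤ d') (hf : Rep w d m f) :
    Rep w d' m f := by
  obtain ⟨q, hq, he⟩ := hf
  exact ⟨q, le_trans hq h, he⟩

lemma rep_add {w : ℚ⟦X⟧} {d m : ℕ} {f g} (hf : Rep w d m f) (hg : Rep w d m g) :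
    Rep w d m (f + g) := by
  obtain ⟨q, hq, he⟩ := hf
  obtain ⟨q', hq', he'⟩ := hg
  exact ⟨q + q', le_trans (Polynomial.natDegree_add_le _ _) (max_le hq hq'),
    by rw [mul_add, he, he', map_add]⟩

lemma rep_smul {w : ℚ⟦X⟧} {d m : ℕ} {f} (c : ℚ) (hf : Rep w d m f) :
    Rep w d m (C c * f) := by
  obtain ⟨q, hq, he⟩ := hf
  refine ⟨Polynomial.C c * q, le_trans Polynomial.natDegree_mul_le (by simp [hq]), ?_⟩
  rw [map_mul, Polynomial.aeval_C, ← he]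
  simp [PowerSeries.algebraMap_apply]
  ring

lemma rep_sum {α : Type*} {w : ℚ⟦X⟧} {d m : ℕ} {s : Finset α} {f : α → ℚ⟦X⟧}
    (h : ∀ i ∈ s, Rep w d m (f i)) : Rep w d m (∑ i ∈ s, f i) := by
  classical
  induction s using Finset.induction_on with
  | empty => simpa using rep_zero w d m
  | insert _ _ hnot ih =>
    rw [Finset.sum_insert hnot]
    exact rep_add (h _ (Finset.mem_insert_self _ _))
      (ih fun i hi => h i (Finset.mem_insert_of_mem hi))

lemma rep_mul {w : ℚ⟦X⟧} {d₁ m₁ d₂ m₂ : ℕ} {f₁ f₂}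
    (h₁ : Rep w d₁ m₁ f₁) (h₂ : Rep w d₂ m₂ f₂) :
    Rep w (d₁ + d₂) (m₁ + m₂) (f₁ * f₂) := by
  obtain ⟨q, hq, he⟩ := h₁
  obtain ⟨q', hq', he'⟩ := h₂
  refine ⟨q * q', le_trans Polynomial.natDegree_mul_le (add_le_add hq hq'), ?_⟩
  rw [map_mul, ← he, ← he', pow_add]
  ring

lemma rep_pad {w : ℚ⟦X⟧} {d m : ℕ} {f} (k : ℕ) (hf : Rep w d m f) :
    Rep w (d + k) (m + k) f := by
  obtain ⟨q, hq, he⟩ := hf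
  refine ⟨(1 - 24*Polynomial.X)^k * q, ?_, ?_⟩
  · refine le_trans Polynomial.natDegree_mul_le ?_
    have h1 : ((1 : Polynomial ℚ) - 24*Polynomial.X).natDegree ≤ 1 := by compute_degree
    have := le_trans (Polynomial.natDegree_pow_le (p := (1 - 24*Polynomial.X : Polynomial ℚ)) (n := k))
      (Nat.mul_le_mul_left k h1)
    omega
  · rw [map_mul, map_pow, map_sub, map_one, map_mul, Polynomial.aeval_X, map_ofNat,
      ← he, pow_add]
    ring

lemma rep_deriv {w f : ℚ⟦X⟧} {d m : ℕ} (hDw : (1 - 24*w) * D w = 1)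
    (hf : Rep w d m f) : Rep w d (m + 2) (D f) := by
  obtain ⟨q, hq, he⟩ := hf
  refine ⟨(1 - 24*Polynomial.X) * Polynomial.derivative q
      + Polynomial.C ((24:ℚ) * m) * q, ?_, ?_⟩
  · refine le_trans (Polynomial.natDegree_add_le _ _) (max_le ?_ ?_)
    · rcases eq_or_ne (Polynomial.derivative q) 0 with h0 | h0
      · simp [h0]
      · have h1 : 1 ≤ q.natDegree := by
          by_contra hc
          push_neg at hc
          have : q.natDegree = 0 := by omega
          obtain ⟨a, rfl⟩ := Polynomial.natDegree_eq_zero.mp this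
          simp at h0
        have h2 : ((1 : Polynomial ℚ) - 24*Polynomial.X).natDegree ≤ 1 := by compute_degree
        have h3 := Polynomial.natDegree_derivative_le q
        have := le_trans (Polynomial.natDegree_mul_le
          (p := (1 - 24*Polynomial.X : Polynomial ℚ)) (q := Polynomial.derivative q))
          (add_le_add h2 h3)
        omega
    · refine le_trans Polynomial.natDegree_mul_le ?_
      rw [Polynomial.natDegree_C]
      simpa using hq
  · have hd : D ((1-24*w)^m * f) = D (Polynomial.aeval w q) := by rw [he]
    rw [D_aeval] at hd
    have hcast : Polynomial.aeval w (Polynomial.C ((24:ℚ) * m)) = 24 * (m : ℚ⟦X⟧) := by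
      rw [Polynomial.aeval_C, PowerSeries.algebraMap_apply, Algebra.algebraMap_self,
        RingHom.id_apply, map_mul, map_natCast, map_ofNat]
    rw [map_add, map_mul, map_mul, map_sub, map_one, map_mul, Polynomial.aeval_X,
      map_ofNat, hcast]
    set A := Polynomial.aeval w q with hA
    set A' := Polynomial.aeval w (Polynomial.derivative q) with hA'
    cases m with
    | zero =>
      rw [pow_zero, one_mul] at hd
      simp only [Nat.cast_zero, mul_zero, zero_mul, add_zero]
      linear_combination ((1-24*w)^2) * hd + (1-24*w)*A'*hDw
    | succ k =>
      rw [D_mul, D_pow, D_u] at hd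
      push_cast
      linear_combination ((1-24*w)^2) * hd + 24*((k:ℚ⟦X⟧)+1)*(D w)*(1-24*w)*he
        + ((1-24*w)*A' + 24*((k:ℚ⟦X⟧)+1)*A)*hDw

lemma rep_iter {w f : ℚ⟦X⟧} {d m : ℕ} (hDw : (1 - 24*w) * D w = 1) (k : ℕ)
    (hf : Rep w d m f) : Rep w d (m + 2*k) (D^[k] f) := by
  induction k with
  | zero => simpa using hf
  | succ n ih =>
    rw [Function.iterate_succ_apply']
    have h2 : m + 2*(n+1) = (m + 2*n) + 2 := by omega
    rw [h2]
    exact rep_deriv hDw ih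


lemma rep_congr {w : ℚ⟦X⟧} {d m d' m' : ℕ} {f} (hd : d = d') (hm : m = m')
    (h : Rep w d m f) : Rep w d' m' f := by subst hd; subst hm; exact h

end Stmt9Aux


theorem stmt9 (w : PowerSeries ℚ) (hw0 : constantCoeff w = 0)
    (hw : (X : ℚ⟦X⟧) = w - 12 * w ^ 2)
    (W : ℕ → PowerSeries ℚ) (hW0 : W 0 = w)
    (hWg : ∀ g, 1 ≤ g →
      W g = 12 * ∑ p ∈ Finset.HasAntidiagonal.antidiagonal g, W p.1 * W p.2
        + 8 * ∑ j ∈ Finset.Icc 1 g, ∑ r ∈ Finset.HasAntidiagonal.antidiagonal (g - j),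
            C (1 / ((2 * j).factorial : ℚ)) * (W r.1 * D^[2 * j] (W r.2))) :
    (∀ g, 1 ≤ g → ∃ P : Polynomial ℚ, P.natDegree ≤ g - 1 ∧
      (1 - 24 * w) ^ (5 * g - 1) * W g = w * Polynomial.aeval w P) ∧
    W 1 = 96 * w * ((1 - 24 * w) ^ 4)⁻¹ := by
  classical
  have h12 : (12:ℚ⟦X⟧) = C 12 := (map_ofNat _ _).symm
  have h8 : (8:ℚ⟦X⟧) = C 8 := (map_ofNat _ _).symm
  have hDw : (1 - 24*w) * D w = 1 := by
    have hp := Stmt9Aux.D_pow w 1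
    norm_num at hp
    have h := congrArg D hw
    rw [Stmt9Aux.D_X, Stmt9Aux.D_sub, h12, Stmt9Aux.D_const_mul, hp, ← h12] at h
    linear_combination -h
  -- constant coefficients all vanish
  have cc : ∀ g, constantCoeff (W g) = 0 := by
    intro g
    induction g using Nat.strong_induction_on with
    | _ g IH =>
    rcases Nat.eq_zero_or_pos g with rfl | hg
    · rw [hW0]; exact hw0
    · rw [hWg g hg]
      simp only [map_add, map_mul, map_sum]
      rw [Finset.sum_eq_zero, Finset.sum_eq_zero]
      · simp
      · intro j hj
        rw [Finset.mem_Icc] at hj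
        apply Finset.sum_eq_zero
        intro r hr
        rw [Finset.HasAntidiagonal.mem_antidiagonal] at hr
        have hr1 : r.1 < g := by omega
        rw [IH r.1 hr1]
        ring
      · intro p hp
        rw [Finset.HasAntidiagonal.mem_antidiagonal] at hp
        rcases lt_or_ge p.1 g with h | h
        · rw [IH p.1 h, zero_mul]
        · have h2 : p.2 < g := by omega
          rw [IH p.2 h2, mul_zero]
  -- the main structure result
  have main : ∀ g, 1 ≤ g → Stmt9Aux.Rep w g (5*g-1) (W g) := by
    intro g
    induction g using Nat.strong_induction_on with
    | _ g IH =>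
    intro hg
    have rep_w : Stmt9Aux.Rep w 1 0 w := ⟨Polynomial.X, by simp, by simp⟩
    have rep_Dw : Stmt9Aux.Rep w 0 1 (D w) := ⟨1, by simp, by simp [hDw]⟩
    have B : ∀ h, h < g → Stmt9Aux.Rep w (h+1) (5*h) (W h) := by
      intro h hh
      rcases Nat.eq_zero_or_pos h with rfl | h1
      · rw [hW0]; exact rep_w
      · exact Stmt9Aux.rep_congr rfl (by omega) (Stmt9Aux.rep_pad 1 (IH h hh h1))
    have A : ∀ h j, h < g → 1 ≤ j →
        Stmt9Aux.Rep w h (5*h + 4*j - 1) (D^[2*j] (W h)) := by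
      intro h j hh hj
      rcases Nat.eq_zero_or_pos h with rfl | h1
      · rw [hW0, show 2*j = (2*j-1)+1 by omega, Function.iterate_succ_apply]
        exact Stmt9Aux.rep_congr rfl (by omega) (Stmt9Aux.rep_iter hDw (2*j-1) rep_Dw)
      · exact Stmt9Aux.rep_congr rfl (by omega) (Stmt9Aux.rep_iter hDw (2*j) (IH h hh h1))
    have ha : ((0:ℕ),g) ∈ Finset.HasAntidiagonal.antidiagonal g := by
      rw [Finset.HasAntidiagonal.mem_antidiagonal]
      simp
    have hb : ((g:ℕ),(0:ℕ)) ∈ (Finset.HasAntidiagonal.antidiagonal g).erase ((0:ℕ),g) := by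
      rw [Finset.mem_erase, Finset.HasAntidiagonal.mem_antidiagonal]
      constructor
      · intro hcon
        have := congrArg Prod.fst hcon
        simp at this
        omega
      · omega
    have key : (1-24*w) * W g
        = 12 * ∑ p ∈ ((Finset.HasAntidiagonal.antidiagonal g).erase ((0:ℕ),g)).erase ((g:ℕ),(0:ℕ)),
            (W p.1 * W p.2)
        + 8 * ∑ j ∈ Finset.Icc 1 g, ∑ r ∈ Finset.HasAntidiagonal.antidiagonal (g-j),
            C (1/((2*j).factorial:ℚ)) * (W r.1 * D^[2*j] (W r.2)) := by
      have hrec := hWg g hg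
      have hsum : ∑ p ∈ Finset.HasAntidiagonal.antidiagonal g, W p.1 * W p.2
          = W 0 * W g + (W g * W 0
            + ∑ p ∈ ((Finset.HasAntidiagonal.antidiagonal g).erase ((0:ℕ),g)).erase ((g:ℕ),(0:ℕ)),
              (W p.1 * W p.2)) := by
        rw [← Finset.add_sum_erase _ (fun p => W p.1 * W p.2) ha,
            ← Finset.add_sum_erase _ (fun p => W p.1 * W p.2) hb]
      rw [hsum, hW0] at hrec
      linear_combination hrec
    have repRHS : Stmt9Aux.Rep w g (5*g-2) ((1-24*w) * W g) := by
      rw [key, h12, h8]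
      apply Stmt9Aux.rep_add
      · apply Stmt9Aux.rep_smul
        apply Stmt9Aux.rep_sum
        intro p hp
        rw [Finset.mem_erase, Finset.mem_erase, Finset.HasAntidiagonal.mem_antidiagonal] at hp
        obtain ⟨hpb, hpa, hpg⟩ := hp
        have h1 : 1 ≤ p.1 := by
          by_contra hc
          push_neg at hc
          apply hpa
          have : p.1 = 0 := by omega
          have : p = ((0:ℕ), g) := by
            ext <;> simp <;> omega
          exact this
        have h2 : 1 ≤ p.2 := by
          by_contra hc
          push_neg at hc
          apply hpb
          have : p.2 = 0 := by omega
          have : p = ((g:ℕ), (0:ℕ)) := by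
            ext <;> simp <;> omega
          exact this
        have hl1 : p.1 < g := by omega
        have hl2 : p.2 < g := by omega
        exact Stmt9Aux.rep_congr (by omega) (by omega)
          (Stmt9Aux.rep_mul (IH p.1 hl1 h1) (IH p.2 hl2 h2))
      · apply Stmt9Aux.rep_smul
        apply Stmt9Aux.rep_sum
        intro j hj
        rw [Finset.mem_Icc] at hj
        apply Stmt9Aux.rep_sum
        intro r hr
        rw [Finset.HasAntidiagonal.mem_antidiagonal] at hr
        apply Stmt9Aux.rep_smul
        have hr1 : r.1 < g := by omega
        have hr2 : r.2 < g := by omega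
        exact Stmt9Aux.rep_congr (by omega) (by omega)
          (Stmt9Aux.rep_pad (j-1) (Stmt9Aux.rep_mul (B r.1 hr1) (A r.2 j hr2 hj.1)))
    obtain ⟨q, hq, he⟩ := repRHS
    refine ⟨q, hq, ?_⟩
    rw [show 5*g-1 = (5*g-2)+1 by omega, pow_succ]
    linear_combination he
  constructor
  · intro g hg
    obtain ⟨q, hq, he⟩ := main g hg
    have h2 : constantCoeff (Polynomial.aeval w q) = q.coeff 0 := by
      conv_lhs => rw [← Polynomial.X_mul_divX_add q]
      rw [map_add, map_mul, Polynomial.aeval_X, Polynomial.aeval_C,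
        PowerSeries.algebraMap_apply, Algebra.algebraMap_self, RingHom.id_apply,
        map_add, map_mul, hw0, zero_mul, zero_add, constantCoeff_C]
    have hcc : q.coeff 0 = 0 := by
      have h3 := congrArg (constantCoeff) he
      rw [map_mul, cc g, mul_zero, h2] at h3
      exact h3.symm
    refine ⟨q.divX, ?_, ?_⟩
    · rw [Polynomial.natDegree_divX_eq_natDegree_tsub_one]
      omega
    · rw [he]
      conv_lhs => rw [← Polynomial.X_mul_divX_add q]
      rw [hcc, map_zero, add_zero, map_mul, Polynomial.aeval_X]
  · have h1 := hWg 1 le_rfl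
    have hanti1 : Finset.HasAntidiagonal.antidiagonal (1:ℕ) = {((0:ℕ),(1:ℕ)), ((1:ℕ),(0:ℕ))} := by decide
    have hanti0 : Finset.HasAntidiagonal.antidiagonal ((1:ℕ)-1) = {((0:ℕ),(0:ℕ))} := by decide
    have hIcc : Finset.Icc (1:ℕ) 1 = {1} := by decide
    rw [hanti1, hIcc, Finset.sum_singleton, hanti0, Finset.sum_singleton,
      Finset.sum_insert (by decide), Finset.sum_singleton, hW0] at h1
    have hfac : (((2*1 : ℕ)).factorial : ℚ) = 2 := by norm_num [Nat.factorial]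
    rw [hfac] at h1
    have hit : D^[2*1] w = D (D w) := by
      rw [show 2*1 = 1+1 from rfl, Function.iterate_succ_apply, Function.iterate_one]
    rw [hit] at h1
    have hdd := congrArg D hDw
    rw [Stmt9Aux.D_one, Stmt9Aux.D_mul, Stmt9Aux.D_u] at hdd
    have hD2 : (1-24*w)^3 * D (D w) = 24 := by
      linear_combination ((1-24*w)^2)*hdd + 24*((1-24*w)*(D w) + 1)*hDw
    have hC : (8:ℚ⟦X⟧) * C (1/2) = 4 := by
      rw [h8, ← map_mul, show (8:ℚ)*(1/2) = 4 by norm_num]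
      exact map_ofNat _ _
    have h4 : (1 - 24*w)^4 * W 1 = 96 * w := by
      linear_combination ((1-24*w)^3)*h1 + 8*(C (1/2))*w*hD2 + 24*w*hC
    have hu : constantCoeff ((1 - 24*w)^4) ≠ 0 := by
      rw [map_pow, map_sub, map_one, map_mul, hw0, mul_zero, sub_zero, one_pow]
      norm_num
    calc W 1 = ((1-24*w)^4)⁻¹ * ((1-24*w)^4 * W 1) := by
          rw [← mul_assoc, PowerSeries.inv_mul_cancel _ hu, one_mul]
      _ = ((1-24*w)^4)⁻¹ * (96*w) := by rw [h4]
      _ = 96 * w * ((1 - 24*w)^4)⁻¹ := by ring
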